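/- Let f be the piecewise affine map of Example 3: on a plane region, f maps triangle ABC affinely onto AEF, triangle ADC affinely onto AFE, and is the identity on the quadrilateral BDFE, where A=(50,100), B=(25,50), C=(50,50), D=(75,50), E=(0,0), F=(100,0) (up to affine coordinates); every point of the union eventually lands in BDFE and is fixed afterwards. Then for every point x with well-defined orbit, the sequence f^n(x) is eventually constant; in particular all Lyapunov exponents lim (1/n) log ‖d_x f^n · v‖ are zero for every x with well-defined orbit and v ≠ 0 such that the limit exists. -/

import Mathlib

/-- Open triangle `ABC` with `A = (50,100)`, `B = (25,50)`, `C = (50,50)`. -/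
def T1ex : Set (ℝ × ℝ) := {p | p.1 < 50 ∧ 50 < p.2 ∧ p.2 < 2 * p.1}

/-- Open triangle `ADC` with `A = (50,100)`, `D = (75,50)`, `C = (50,50)`. -/
def T2ex : Set (ℝ × ℝ) := {p | 50 < p.1 ∧ 50 < p.2 ∧ p.2 < 200 - 2 * p.1}

/-- Open quadrilateral `BDFE` with `B = (25,50)`, `D = (75,50)`, `F = (100,0)`, `E = (0,0)`. -/
def Qex : Set (ℝ × ℝ) := {p | 0 < p.2 ∧ p.2 < 50 ∧ p.2 < 2 * p.1 ∧ p.2 < 200 - 2 * p.1}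

/-- The affine map sending `ABC` onto `AEF` (`A ↦ A`, `B ↦ E`, `C ↦ F`). -/
def g1 (p : ℝ × ℝ) : ℝ × ℝ := (4 * p.1 - p.2 - 50, 2 * p.2 - 100)

/-- The affine map sending `ADC` onto `AFE` (`A ↦ A`, `D ↦ F`, `C ↦ E`). -/
def g2 (p : ℝ × ℝ) : ℝ × ℝ := (4 * p.1 + p.2 - 250, 2 * p.2 - 100)

open Classical in
/-- The piecewise affine map of Example 3. -/
noncomputable def fEx3 (p : ℝ × ℝ) : ℝ × ℝ :=
  if p ∈ T1ex then g1 p else if p ∈ T2ex then g2 p else p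

/-- Linear part of `g1`. -/
noncomputable def M1 : ℝ × ℝ →ₗ[ℝ] ℝ × ℝ :=
  LinearMap.prod ((4 : ℝ) • LinearMap.fst ℝ ℝ ℝ - LinearMap.snd ℝ ℝ ℝ)
    ((2 : ℝ) • LinearMap.snd ℝ ℝ ℝ)

/-- Linear part of `g2`. -/
noncomputable def M2 : ℝ × ℝ →ₗ[ℝ] ℝ × ℝ :=
  LinearMap.prod ((4 : ℝ) • LinearMap.fst ℝ ℝ ℝ + LinearMap.snd ℝ ℝ ℝ)
    ((2 : ℝ) • LinearMap.snd ℝ ℝ ℝ)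

open Classical in
/-- The linear part `d_p f` of `f` at `p`. -/
noncomputable def DfEx3 (p : ℝ × ℝ) : ℝ × ℝ →ₗ[ℝ] ℝ × ℝ :=
  if p ∈ T1ex then M1 else if p ∈ T2ex then M2 else LinearMap.id

/-- The cocycle `d_p f^n`, product of the linear parts along the orbit of `p`. -/
noncomputable def cocycleEx3 (p : ℝ × ℝ) : ℕ → (ℝ × ℝ →ₗ[ℝ] ℝ × ℝ)
  | 0 => LinearMap.id
  | n + 1 => (DfEx3 (fEx3^[n] p)).comp (cocycleEx3 p n)

section Aux

lemma fEx3_fix {p : ℝ × ℝ} (h : p ∉ T1ex ∪ T2ex) : fEx3 p = p := by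
  rw [Set.mem_union] at h
  push_neg at h
  simp [fEx3, h.1, h.2]

lemma DfEx3_id {p : ℝ × ℝ} (h : p ∉ T1ex ∪ T2ex) : DfEx3 p = LinearMap.id := by
  rw [Set.mem_union] at h
  push_neg at h
  simp [DfEx3, h.1, h.2]

lemma snd_bounds {p : ℝ × ℝ} (h : p ∈ T1ex ∪ T2ex) : 50 < p.2 ∧ p.2 < 100 := by
  rcases h with h | h
  · obtain ⟨h1, h2, h3⟩ := h
    exact ⟨h2, by linarith⟩
  · obtain ⟨h1, h2, h3⟩ := h
    exact ⟨h2, by linarith⟩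

lemma snd_fEx3 {p : ℝ × ℝ} (h : p ∈ T1ex ∪ T2ex) : (fEx3 p).2 = 2 * p.2 - 100 := by
  rcases h with h | h
  · simp [fEx3, h, g1]
  · have h1 : p ∉ T1ex := by
      intro h1
      exact absurd h.1 (by linarith [h1.1])
    simp [fEx3, h1, h, g2]

lemma exits (p : ℝ × ℝ) : ∃ N, fEx3^[N] p ∉ T1ex ∪ T2ex := by
  by_contra hc
  push_neg at hc
  have key : ∀ n, 100 - (fEx3^[n] p).2 = 2 ^ n * (100 - p.2) := by
    intro n
    induction n with
    | zero => simp
    | succ n ih =>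
      rw [Function.iterate_succ_apply', snd_fEx3 (hc n), pow_succ]
      linear_combination 2 * ih
  have h0 := snd_bounds (by simpa using hc 0)
  have hpos : (0 : ℝ) < 100 - p.2 := by linarith [h0.2]
  obtain ⟨n, hn⟩ := pow_unbounded_of_one_lt (50 / (100 - p.2)) (one_lt_two : (1:ℝ) < 2)
  have h50 : (50 : ℝ) < 2 ^ n * (100 - p.2) := by
    calc (50 : ℝ) = 50 / (100 - p.2) * (100 - p.2) := by field_simp
    _ < 2 ^ n * (100 - p.2) := mul_lt_mul_of_pos_right hn hpos
  have hb := (snd_bounds (hc n)).1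
  have := key n
  linarith

lemma M1_inj : Function.Injective M1 := by
  intro a b h
  simp only [M1, LinearMap.prod_apply, Function.prod_apply, LinearMap.sub_apply, LinearMap.smul_apply,
    LinearMap.fst_apply, LinearMap.snd_apply, smul_eq_mul, Prod.mk.injEq] at h
  exact Prod.ext (by linarith [h.1, h.2]) (by linarith [h.2])

lemma M2_inj : Function.Injective M2 := by
  intro a b h
  simp only [M2, LinearMap.prod_apply, Function.prod_apply, LinearMap.add_apply, LinearMap.smul_apply,
    LinearMap.fst_apply, LinearMap.snd_apply, smul_eq_mul, Prod.mk.injEq] at h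
  exact Prod.ext (by linarith [h.1, h.2]) (by linarith [h.2])

lemma DfEx3_inj (p : ℝ × ℝ) : Function.Injective (DfEx3 p) := by
  unfold DfEx3
  split_ifs
  · exact M1_inj
  · exact M2_inj
  · exact fun a b h => h

lemma cocycle_inj (p : ℝ × ℝ) (n : ℕ) : Function.Injective (cocycleEx3 p n) := by
  induction n with
  | zero => exact fun a b h => h
  | succ n ih =>
    show Function.Injective ((DfEx3 (fEx3^[n] p)).comp (cocycleEx3 p n))
    exact (DfEx3_inj _).comp ih

end Aux

/-- For the piecewise affine map of Example 3 (identity on the quadrilateral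
`BDFE`), every orbit that is well defined (stays in the continuity domains) is eventually
constant; in particular every Lyapunov exponent `lim (1/n) log ‖d_p f^n v‖` that exists is
zero. -/
theorem fEx3_orbits_eventually_constant :
    ∀ p : ℝ × ℝ, (∀ n : ℕ, fEx3^[n] p ∈ T1ex ∪ T2ex ∪ Qex) →
      (∃ N : ℕ, ∀ n : ℕ, N ≤ n → fEx3^[n] p = fEx3^[N] p) ∧
      (∀ v : ℝ × ℝ, v ≠ 0 → ∀ L : ℝ,
        Filter.Tendsto (fun n : ℕ => Real.log ‖cocycleEx3 p n v‖ / n)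
          Filter.atTop (nhds L) → L = 0) := by
  intro p _
  obtain ⟨N, hN⟩ := exits p
  have stable : ∀ n, N ≤ n → fEx3^[n] p = fEx3^[N] p := by
    intro n hn
    induction n, hn using Nat.le_induction with
    | base => rfl
    | succ n hn ih =>
      rw [Function.iterate_succ_apply', ih, fEx3_fix hN]
  constructor
  · exact ⟨N, stable⟩
  · intro v hv L hL
    have coc : ∀ n, N ≤ n → cocycleEx3 p n = cocycleEx3 p N := by
      intro n hn
      induction n, hn using Nat.le_induction with
      | base => rfl
      | succ n hn ih =>
        show (DfEx3 (fEx3^[n] p)).comp (cocycleEx3 p n) = cocycleEx3 p N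
        rw [stable n hn, DfEx3_id hN, ih]
        rfl
    set c : ℝ := ‖cocycleEx3 p N v‖ with hc
    have hc0 : cocycleEx3 p N v ≠ 0 := by
      intro h
      exact hv (cocycle_inj p N (by simpa using h))
    have heq : (fun n : ℕ => Real.log ‖cocycleEx3 p n v‖ / n) =ᶠ[Filter.atTop]
        fun n : ℕ => Real.log c / n := by
      filter_upwards [Filter.eventually_atTop.2 ⟨N, fun n hn => coc n hn⟩] with n hn
      rw [hn]
    have h0 : Filter.Tendsto (fun n : ℕ => Real.log c / n) Filter.atTop (nhds 0) :=
      tendsto_const_div_atTop_nhds_zero_nat _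
    exact tendsto_nhds_unique hL (h0.congr' heq.symm)
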